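/- Let (ψₙ)_{n∈ℕ} be a Hilbert (orthonormal) basis of L²(0,1), let (λₙ)_{n∈ℕ} be real numbers with λₙ ≥ 1, let p ∈ L¹(0,1) be real-valued, and set g(x) = exp(−(1/2)∫₀ˣ p(ξ) dξ). Let u₀, u₁ ∈ L²(0,1), Aₙ = ⟨g u₀, ψₙ⟩, Bₙ = ⟨g u₁, ψₙ⟩, and assume Σₙ λₙ |Aₙ|² < ∞. Then the L²(0,1)-valued map t ↦ v(t) = Σₙ ( Aₙ cos(λₙ^{1/2} t) + λₙ^{−1/2} Bₙ sin(λₙ^{1/2} t) ) ψₙ is differentiable on ℝ with derivative v'(t) = Σₙ ( −λₙ^{1/2} Aₙ sin(λₙ^{1/2} t) + Bₙ cos(λₙ^{1/2} t) ) ψₙ, and for every t ∈ ℝ, ‖g^{−1} · v'(t)‖²_{L²(0,1)} ≤ 2 exp(‖p‖_{L¹(0,1)}) ( Σₙ λₙ |Aₙ|² + Σₙ |Bₙ|² ). -/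

import Mathlib

open MeasureTheory Set
open scoped RealInnerProductSpace

open Filter
open scoped ENNReal Topology

lemma s10_lp_norm_sq (x : lp (fun _ : ℕ => ℝ) 2) : ‖x‖ ^ (2:ℕ) = ∑' n, (x n)^2 := by
  have h := lp.norm_rpow_eq_tsum (p := 2) (by norm_num) x
  have e : ((2:ℝ≥0∞).toReal) = ((2:ℕ):ℝ) := by simp
  simp only [e, Real.rpow_natCast, Real.norm_eq_abs, sq_abs] at h
  simpa [sq_abs] using h

lemma s10_lp_norm (x : lp (fun _ : ℕ => ℝ) 2) : ‖x‖ = Real.sqrt (∑' n, (x n)^2) := by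
  rw [← s10_lp_norm_sq, Real.sqrt_sq (norm_nonneg _)]

lemma s10_hasDerivAt {H : Type*} [NormedAddCommGroup H] [InnerProductSpace ℝ H]
    (ψ : HilbertBasis ℕ ℝ H)
    (a a' : ℝ → ℕ → ℝ) (ha : ∀ s, Memℓp (a s) 2) (ha' : ∀ s, Memℓp (a' s) 2)
    (hd : ∀ n s, HasDerivAt (fun s' => a s' n) (a' s n) s)
    (u : ℕ → ℝ) (hu : Summable fun n => (u n)^2) (hub : ∀ n s, |a' s n| ≤ u n)
    (t : ℝ) :
    HasDerivAt (fun s => ψ.repr.symm (⟨a s, ha s⟩ : lp (fun _ : ℕ => ℝ) 2))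
      (ψ.repr.symm (⟨a' t, ha' t⟩ : lp (fun _ : ℕ => ℝ) 2)) t := by
  set F : ℝ → H := fun s => ψ.repr.symm (⟨a s, ha s⟩ : lp (fun _ : ℕ => ℝ) 2) with hF
  -- the key ℓ² convergence of squared slopes
  have key : Tendsto (fun s => ∑' n, (slope (fun s' => a s' n) t s - a' t n)^2)
      (𝓝[≠] t) (𝓝 (∑' _ : ℕ, (0:ℝ))) := by
    apply tendsto_tsum_of_dominated_convergence (bound := fun n => (2 * u n)^2)
    · have : Summable fun n => 4 * (u n)^2 := hu.mul_left 4
      refine this.congr fun n => by ring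
    · intro n
      have h1 : Tendsto (fun s => slope (fun s' => a s' n) t s - a' t n) (𝓝[≠] t) (𝓝 0) := by
        simpa using ((hasDerivAt_iff_tendsto_slope.1 (hd n t)).sub
          (tendsto_const_nhds (x := a' t n)))
      simpa [sq] using h1.mul h1
    · filter_upwards [self_mem_nhdsWithin] with s hs n
      have hst : s ≠ t := hs
      have hmvt : ‖a s n - a t n‖ ≤ u n * ‖s - t‖ := by
        refine Convex.norm_image_sub_le_of_norm_hasDerivWithin_le
          (f := fun s' => a s' n) (f' := fun s' => a' s' n) (s := univ)
          (fun x _ => (hd n x).hasDerivWithinAt) (fun x _ => ?_) convex_univ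
          (mem_univ t) (mem_univ s)
        simpa [Real.norm_eq_abs] using hub n x
      have hslope : |slope (fun s' => a s' n) t s| ≤ u n := by
        rw [slope_def_field, abs_div]
        rw [div_le_iff₀ (by simpa [sub_eq_zero] using sub_ne_zero.2 hst |> abs_pos.2)]
        simpa [Real.norm_eq_abs] using hmvt
      have hu0 : 0 ≤ u n := le_trans (abs_nonneg _) (hub n t)
      have habs : |slope (fun s' => a s' n) t s - a' t n| ≤ 2 * u n := by
        have := abs_sub_abs_le_abs_sub (slope (fun s' => a s' n) t s) (a' t n)
        have h2 := hub n t
        calc |slope (fun s' => a s' n) t s - a' t n|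
            ≤ |slope (fun s' => a s' n) t s| + |a' t n| := abs_sub _ _
          _ ≤ u n + u n := add_le_add hslope h2
          _ = 2 * u n := by ring
      have hsq2 : (slope (fun s' => a s' n) t s - a' t n)^2 ≤ (2 * u n)^2 := by
        have h3 := pow_le_pow_left₀ (abs_nonneg _) habs 2
        simpa [sq_abs] using h3
      rw [Real.norm_eq_abs, abs_of_nonneg (sq_nonneg _)]
      exact hsq2
  have key0 : Tendsto (fun s => ∑' n, (slope (fun s' => a s' n) t s - a' t n)^2)
      (𝓝[≠] t) (𝓝 0) := by simpa using key
  have hdist : ∀ s, dist (slope F t s) (ψ.repr.symm (⟨a' t, ha' t⟩ : lp (fun _ : ℕ => ℝ) 2))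
      = Real.sqrt (∑' n, (slope (fun s' => a s' n) t s - a' t n)^2) := by
    intro s
    rw [dist_eq_norm]
    have hX : slope F t s - ψ.repr.symm (⟨a' t, ha' t⟩ : lp (fun _ : ℕ => ℝ) 2)
        = ψ.repr.symm ((s - t)⁻¹ • ((⟨a s, ha s⟩ : lp (fun _ : ℕ => ℝ) 2) - ⟨a t, ha t⟩)
            - ⟨a' t, ha' t⟩) := by
      simp [F, slope, vsub_eq_sub, map_sub, LinearIsometryEquiv.map_smul]
    rw [hX, LinearIsometryEquiv.norm_map, s10_lp_norm]
    congr 1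
  rw [hasDerivAt_iff_tendsto_slope, tendsto_iff_dist_tendsto_zero]
  have h2 : Tendsto (fun s => Real.sqrt (∑' n, (slope (fun s' => a s' n) t s - a' t n)^2))
      (𝓝[≠] t) (𝓝 0) := by
    have := (Real.continuous_sqrt.tendsto 0).comp key0
    simpa [Function.comp_def] using this
  exact Tendsto.congr (fun s => (hdist s).symm) h2


/-- Differentiability in time of the Fourier-series solution and the estimate
`‖∂ₜu(t,·)‖²_{L²} = ‖g⁻¹ v'(t)‖²_{L²} ≤ 2 exp(‖p‖_{L¹}) (Σₙ λₙ|Aₙ|² + Σₙ |Bₙ|²)`. -/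
theorem stmt_10
    (ψ : HilbertBasis ℕ ℝ (Lp ℝ 2 (volume.restrict (Ioo (0:ℝ) 1))))
    (lam : ℕ → ℝ) (hlam : ∀ n, 1 ≤ lam n)
    (p : ℝ → ℝ) (hp : IntegrableOn p (Ioo (0:ℝ) 1))
    (g : ℝ → ℝ) (hg : ∀ x, g x = Real.exp (-(1/2) * ∫ t in (0:ℝ)..x, p t))
    (u₀ u₁ : ℝ → ℝ)
    (hu₀ : MemLp u₀ 2 (volume.restrict (Ioo (0:ℝ) 1)))
    (hu₁ : MemLp u₁ 2 (volume.restrict (Ioo (0:ℝ) 1)))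
    (gu₀ gu₁ : Lp ℝ 2 (volume.restrict (Ioo (0:ℝ) 1)))
    (hgu₀ : ∀ᵐ x ∂(volume.restrict (Ioo (0:ℝ) 1)), gu₀ x = g x * u₀ x)
    (hgu₁ : ∀ᵐ x ∂(volume.restrict (Ioo (0:ℝ) 1)), gu₁ x = g x * u₁ x)
    (A B : ℕ → ℝ)
    (hA : ∀ n, A n = ⟪gu₀, ψ n⟫) (hB : ∀ n, B n = ⟪gu₁, ψ n⟫)
    (hA2 : Summable fun n => lam n * (A n) ^ 2)
    (v v' : ℝ → Lp ℝ 2 (volume.restrict (Ioo (0:ℝ) 1)))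
    (hv : ∀ t, v t = ∑' n,
      (A n * Real.cos (Real.sqrt (lam n) * t)
        + (Real.sqrt (lam n))⁻¹ * B n * Real.sin (Real.sqrt (lam n) * t)) • ψ n)
    (hv' : ∀ t, v' t = ∑' n,
      (-(Real.sqrt (lam n)) * A n * Real.sin (Real.sqrt (lam n) * t)
        + B n * Real.cos (Real.sqrt (lam n) * t)) • ψ n)
    (w : ℝ → ℝ → ℝ)
    (hw : ∀ t, ∀ᵐ x ∂(volume.restrict (Ioo (0:ℝ) 1)),
      w t x = Real.exp ((1/2) * ∫ s in (0:ℝ)..x, p s) * (v' t) x) :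
    (∀ t, HasDerivAt v (v' t) t) ∧
    ∀ t, (∫ x in Ioo (0:ℝ) 1, (w t x) ^ 2) ≤
      2 * Real.exp (∫ x in Ioo (0:ℝ) 1, |p x|) *
        ((∑' n, lam n * (A n) ^ 2) + ∑' n, (B n) ^ 2) := by
  have hl0 : ∀ n, (0:ℝ) < lam n := fun n => lt_of_lt_of_le one_pos (hlam n)
  have hs1 : ∀ n, 1 ≤ Real.sqrt (lam n) := fun n => by
    simpa using Real.sqrt_le_sqrt (hlam n)
  have hs0 : ∀ n, (0:ℝ) < Real.sqrt (lam n) := fun n => lt_of_lt_of_le one_pos (hs1 n)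
  have hsq : ∀ n, Real.sqrt (lam n) ^ 2 = lam n := fun n => Real.sq_sqrt (hl0 n).le
  -- coefficient functions
  set c : ℝ → ℕ → ℝ := fun s n =>
      A n * Real.cos (Real.sqrt (lam n) * s)
        + (Real.sqrt (lam n))⁻¹ * B n * Real.sin (Real.sqrt (lam n) * s) with hcdef
  set c' : ℝ → ℕ → ℝ := fun s n =>
      -(Real.sqrt (lam n)) * A n * Real.sin (Real.sqrt (lam n) * s)
        + B n * Real.cos (Real.sqrt (lam n) * s) with hc'def
  -- summability facts
  have hB2 : Summable fun n => (B n)^2 := by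
    have h := lp.memℓp (ψ.repr gu₁)
    have h2 := (memℓp_gen_iff (by norm_num : 0 < (2:ℝ≥0∞).toReal)).1 h
    have e : ((2:ℝ≥0∞).toReal) = ((2:ℕ):ℝ) := by simp
    simp only [e, Real.rpow_natCast, Real.norm_eq_abs, sq_abs] at h2
    refine h2.congr fun n => ?_
    rw [ψ.repr_apply_apply, real_inner_comm, ← hB]
  have hA2' : Summable fun n => (A n)^2 :=
    Summable.of_nonneg_of_le (fun n => sq_nonneg _)
      (fun n => le_mul_of_one_le_left (sq_nonneg _) (hlam n)) hA2
  have hABs : Summable fun n => 2 * (lam n * (A n)^2 + (B n)^2) := (hA2.add hB2).mul_left 2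
  have hABs' : Summable fun n => 2 * ((A n)^2 + (B n)^2) := (hA2'.add hB2).mul_left 2
  -- pointwise bounds
  have hsin : ∀ x : ℝ, |Real.sin x| ≤ 1 := fun x => Real.abs_sin_le_one x
  have hcos : ∀ x : ℝ, |Real.cos x| ≤ 1 := fun x => Real.abs_cos_le_one x
  have hc'le : ∀ s n, |c' s n| ≤ Real.sqrt (lam n) * |A n| + |B n| := by
    intro s n
    calc |c' s n| ≤ |(-(Real.sqrt (lam n))) * A n * Real.sin (Real.sqrt (lam n) * s)|
          + |B n * Real.cos (Real.sqrt (lam n) * s)| := abs_add_le _ _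
      _ = Real.sqrt (lam n) * |A n| * |Real.sin (Real.sqrt (lam n) * s)|
          + |B n| * |Real.cos (Real.sqrt (lam n) * s)| := by
            rw [abs_mul, abs_mul, abs_mul, abs_neg, abs_of_nonneg (Real.sqrt_nonneg _)]
      _ ≤ Real.sqrt (lam n) * |A n| * 1 + |B n| * 1 := by
            gcongr
            · exact hsin _
            · exact hcos _
      _ = Real.sqrt (lam n) * |A n| + |B n| := by ring
  have hcle : ∀ s n, |c s n| ≤ |A n| + |B n| := by
    intro s n
    have hinv : (Real.sqrt (lam n))⁻¹ ≤ 1 := by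
      rw [inv_le_one_iff₀]; right; exact hs1 n
    calc |c s n| ≤ |A n * Real.cos (Real.sqrt (lam n) * s)|
          + |(Real.sqrt (lam n))⁻¹ * B n * Real.sin (Real.sqrt (lam n) * s)| := abs_add_le _ _
      _ = |A n| * |Real.cos (Real.sqrt (lam n) * s)|
          + (Real.sqrt (lam n))⁻¹ * |B n| * |Real.sin (Real.sqrt (lam n) * s)| := by
            rw [abs_mul, abs_mul, abs_mul, abs_of_nonneg (inv_nonneg.2 (Real.sqrt_nonneg _))]
      _ ≤ |A n| * 1 + 1 * |B n| * 1 := by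
            gcongr
            · exact hcos _
            · exact hsin _
      _ = |A n| + |B n| := by ring
  have hc'sq : ∀ s n, (c' s n)^2 ≤ 2 * (lam n * (A n)^2 + (B n)^2) := by
    intro s n
    have h1 := hc'le s n
    have h2 : (c' s n)^2 ≤ (Real.sqrt (lam n) * |A n| + |B n|)^2 := by
      have := pow_le_pow_left₀ (abs_nonneg _) h1 2
      simpa [sq_abs] using this
    nlinarith [sq_nonneg (Real.sqrt (lam n) * |A n| - |B n|), hsq n, sq_abs (A n), sq_abs (B n)]
  have hcsq : ∀ s n, (c s n)^2 ≤ 2 * ((A n)^2 + (B n)^2) := by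
    intro s n
    have h1 := hcle s n
    have h2 : (c s n)^2 ≤ (|A n| + |B n|)^2 := by
      have := pow_le_pow_left₀ (abs_nonneg _) h1 2
      simpa [sq_abs] using this
    nlinarith [sq_nonneg (|A n| - |B n|), sq_abs (A n), sq_abs (B n)]
  -- membership in ℓ²
  have hnr : ∀ (f : ℕ → ℝ), (fun n => ‖f n‖ ^ ((2:ℝ≥0∞).toReal)) = fun n => (f n)^2 := by
    intro f; funext n
    have e : ((2:ℝ≥0∞).toReal) = ((2:ℕ):ℝ) := by simp
    rw [e, Real.rpow_natCast, Real.norm_eq_abs, sq_abs]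
  have hmc : ∀ s, Memℓp (c s) 2 := by
    intro s
    apply memℓp_gen
    rw [hnr]
    exact Summable.of_nonneg_of_le (fun n => sq_nonneg _) (fun n => hcsq s n) hABs'
  have hmc' : ∀ s, Memℓp (c' s) 2 := by
    intro s
    apply memℓp_gen
    rw [hnr]
    exact Summable.of_nonneg_of_le (fun n => sq_nonneg _) (fun n => hc'sq s n) hABs
  -- identification of v and v'
  have hvC : ∀ s, v s = ψ.repr.symm (⟨c s, hmc s⟩ : lp (fun _ : ℕ => ℝ) 2) := by
    intro s; rw [hv s]; exact (ψ.hasSum_repr_symm ⟨c s, hmc s⟩).tsum_eq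
  have hv'C : ∀ s, v' s = ψ.repr.symm (⟨c' s, hmc' s⟩ : lp (fun _ : ℕ => ℝ) 2) := by
    intro s; rw [hv' s]; exact (ψ.hasSum_repr_symm ⟨c' s, hmc' s⟩).tsum_eq
  -- coordinatewise derivatives
  have hder : ∀ n s, HasDerivAt (fun s' => c s' n) (c' s n) s := by
    intro n s
    have hlin : HasDerivAt (fun s' : ℝ => Real.sqrt (lam n) * s') (Real.sqrt (lam n)) s := by
      simpa using (hasDerivAt_id s).const_mul (Real.sqrt (lam n))
    have hcosd := hlin.cos
    have hsind := hlin.sin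
    have h := (hcosd.const_mul (A n)).add (hsind.const_mul ((Real.sqrt (lam n))⁻¹ * B n))
    refine h.congr_deriv ?_
    have hne : Real.sqrt (lam n) ≠ 0 := (hs0 n).ne'
    have hinv : (Real.sqrt (lam n))⁻¹ * Real.sqrt (lam n) = 1 := inv_mul_cancel₀ hne
    show _ = -(Real.sqrt (lam n)) * A n * Real.sin (Real.sqrt (lam n) * s)
      + B n * Real.cos (Real.sqrt (lam n) * s)
    linear_combination (B n * Real.cos (Real.sqrt (lam n) * s)) * hinv
  -- Part 1
  have hu2 : Summable fun n => (Real.sqrt (lam n) * |A n| + |B n|)^2 := by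
    refine Summable.of_nonneg_of_le (fun n => sq_nonneg _) (fun n => ?_) hABs
    nlinarith [sq_nonneg (Real.sqrt (lam n) * |A n| - |B n|), hsq n, sq_abs (A n), sq_abs (B n)]
  have hD : ∀ t, HasDerivAt v (v' t) t := by
    intro t
    have hkey := s10_hasDerivAt ψ c c' hmc hmc' hder
      (fun n => Real.sqrt (lam n) * |A n| + |B n|) hu2 (fun n s => hc'le s n) t
    have hfun : v = fun s => ψ.repr.symm (⟨c s, hmc s⟩ : lp (fun _ : ℕ => ℝ) 2) := funext hvC
    rw [hfun, hv'C t]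
    exact hkey
  refine ⟨hD, ?_⟩
  -- Part 2
  intro t
  set K : ℝ := ∫ x in Ioo (0:ℝ) 1, |p x| with hK
  have hK0 : 0 ≤ K := setIntegral_nonneg measurableSet_Ioo fun x _ => abs_nonneg _
  -- interval integral bound
  have hI : ∀ x ∈ Ioo (0:ℝ) 1, (∫ s in (0:ℝ)..x, p s) ≤ K := by
    intro x hx
    have h1 : (∫ s in (0:ℝ)..x, p s) ≤ |∫ s in (0:ℝ)..x, p s| := le_abs_self _
    have h2 : |∫ s in (0:ℝ)..x, p s| ≤ ∫ s in (0:ℝ)..x, |p s| :=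
      intervalIntegral.abs_integral_le_integral_abs hx.1.le
    have h3 : (∫ s in (0:ℝ)..x, |p s|) = ∫ s in Ioc (0:ℝ) x, |p s| :=
      intervalIntegral.integral_of_le hx.1.le
    have hsub : Ioc (0:ℝ) x ⊆ Ioo (0:ℝ) 1 := fun y hy => ⟨hy.1, lt_of_le_of_lt hy.2 hx.2⟩
    have h4 : (∫ s in Ioc (0:ℝ) x, |p s|) ≤ ∫ s in Ioo (0:ℝ) 1, |p s| :=
      setIntegral_mono_set hp.abs (ae_of_all _ fun y => abs_nonneg _)
        (HasSubset.Subset.eventuallyLE hsub)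
    linarith
  -- norm of v' t
  have hnormv' : ‖v' t‖^2 = ∑' n, (c' t n)^2 := by
    rw [hv'C t]
    rw [LinearIsometryEquiv.norm_map]
    exact s10_lp_norm_sq _
  have hSc' : Summable fun n => (c' t n)^2 :=
    Summable.of_nonneg_of_le (fun n => sq_nonneg _) (fun n => hc'sq t n) hABs
  have hsum_le : (∑' n, (c' t n)^2) ≤ 2 * ((∑' n, lam n * (A n)^2) + ∑' n, (B n)^2) := by
    calc (∑' n, (c' t n)^2) ≤ ∑' n, 2 * (lam n * (A n)^2 + (B n)^2) :=
          Summable.tsum_le_tsum (fun n => hc'sq t n) hSc' hABs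
      _ = 2 * ((∑' n, lam n * (A n)^2) + ∑' n, (B n)^2) := by
          rw [tsum_mul_left, Summable.tsum_add hA2 hB2]
  -- integral identities
  have hinner : (⟪v' t, v' t⟫ : ℝ) = ∫ x in Ioo (0:ℝ) 1, ((v' t) x)^2 := by
    rw [L2.inner_def]
    simp_rw [RCLike.inner_apply, RCLike.conj_to_real, ← sq]
  have hint : Integrable (fun x => ((v' t) x)^2) (volume.restrict (Ioo (0:ℝ) 1)) := by
    have h := L2.integrable_inner (𝕜 := ℝ) (v' t) (v' t)
    simpa [RCLike.inner_apply, RCLike.conj_to_real, ← sq] using h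
  -- a.e. bound on w²
  have hae : ∀ᵐ x ∂(volume.restrict (Ioo (0:ℝ) 1)),
      (w t x)^2 ≤ Real.exp K * ((v' t) x)^2 := by
    filter_upwards [hw t, ae_restrict_mem measurableSet_Ioo] with x hwx hxmem
    rw [hwx]
    have h5 : Real.exp ((1/2) * ∫ s in (0:ℝ)..x, p s) ^ 2
        = Real.exp (∫ s in (0:ℝ)..x, p s) := by
      rw [sq, ← Real.exp_add]; congr 1; ring
    calc (Real.exp ((1/2) * ∫ s in (0:ℝ)..x, p s) * (v' t) x)^2
        = Real.exp (∫ s in (0:ℝ)..x, p s) * ((v' t) x)^2 := by rw [mul_pow, h5]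
      _ ≤ Real.exp K * ((v' t) x)^2 :=
          mul_le_mul_of_nonneg_right (Real.exp_le_exp.mpr (hI x hxmem)) (sq_nonneg _)
  calc (∫ x in Ioo (0:ℝ) 1, (w t x)^2)
      ≤ ∫ x in Ioo (0:ℝ) 1, Real.exp K * ((v' t) x)^2 :=
        integral_mono_of_nonneg (ae_of_all _ fun x => sq_nonneg _) (hint.const_mul _) hae
    _ = Real.exp K * ∫ x in Ioo (0:ℝ) 1, ((v' t) x)^2 := integral_const_mul _ _
    _ = Real.exp K * ‖v' t‖^2 := by rw [← hinner, real_inner_self_eq_norm_sq]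
    _ = Real.exp K * ∑' n, (c' t n)^2 := by rw [hnormv']
    _ ≤ Real.exp K * (2 * ((∑' n, lam n * (A n)^2) + ∑' n, (B n)^2)) :=
        mul_le_mul_of_nonneg_left hsum_le (Real.exp_pos _).le
    _ = 2 * Real.exp K * ((∑' n, lam n * (A n)^2) + ∑' n, (B n)^2) := by ring
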